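/- Let GSU(V,H) := { g ∈ GU(V,H) : det g = ν(g)² }. For every g ∈ GSU(V,H), the map ⋀²g commutes with L, hence is a right-B-linear automorphism of Ṽ, and satisfies ⟨(⋀²g)(x), (⋀²g)(y)⟩ = ν(g)²·⟨x,y⟩ for all x,y ∈ Ṽ. The resulting map GSU(V,H) → GU_B(Ṽ), g ↦ ⋀²g, is a group homomorphism whose kernel is {id_V, −id_V}. -/

import Mathlib

set_option maxHeartbeats 1000000
set_option synthInstance.maxHeartbeats 200000


/-- The canonical generator `v₁ ∧ ⋯ ∧ vₙ` of the `n`-th exterior power, as an element of the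
submodule `⋀[E]^n V` of the exterior algebra. -/
noncomputable def wedgeι (E : Type*) [CommRing E] {V : Type*} [AddCommGroup V] [Module E V]
    (n : ℕ) (v : Fin n → V) : ⋀[E]^n V :=
  ⟨ExteriorAlgebra.ιMulti E n v, ExteriorAlgebra.ιMulti_range E n (Set.mem_range_self v)⟩

/-- The wedge (exterior) product `⋀²V × ⋀²V → ⋀⁴V`. -/
noncomputable def wedgeMul (E : Type*) [CommRing E] {V : Type*} [AddCommGroup V] [Module E V]
    (x y : ⋀[E]^2 V) : ⋀[E]^4 V :=
  ⟨(x : ExteriorAlgebra E V) * (y : ExteriorAlgebra E V), by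
    have h := Submodule.mul_mem_mul x.2 y.2
    have e : (⋀[E]^2 V) * (⋀[E]^2 V) = ⋀[E]^4 V := by
      show LinearMap.range (ExteriorAlgebra.ι E (M := V)) ^ 2 *
          LinearMap.range (ExteriorAlgebra.ι E (M := V)) ^ 2
        = LinearMap.range (ExteriorAlgebra.ι E (M := V)) ^ 4
      rw [← pow_add]
    exact e ▸ h⟩

/-- `h` is a form on `⋀^r V`, additive in each variable, `ρ`-sesquilinear, conjugate-symmetric,
whose value on decomposable wedges is the determinant `det (H (v i) (w j))`. -/
def IsDetForm {E : Type*} [Field E] (ρ : E →+* E)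
    {V : Type*} [AddCommGroup V] [Module E V] (H : V → V → E) (r : ℕ)
    (h : (⋀[E]^r V) → (⋀[E]^r V) → E) : Prop :=
  (∀ x y z, h (x + y) z = h x z + h y z) ∧
  (∀ x y z, h x (y + z) = h x y + h x z) ∧
  (∀ (a b : E) (x y : ⋀[E]^r V), h (a • x) (b • y) = ρ a * h x y * b) ∧
  (∀ x y, h x y = ρ (h y x)) ∧
  (∀ v w : Fin r → V,
    h (wedgeι E r v) (wedgeι E r w) = (Matrix.of fun i j => H (v i) (w j)).det)


/-- The quaternion algebra `B = E ⊕ E𝐣` (elements written `a + b·𝐣`) attached to the quadratic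
extension `E` with conjugation `ρ` and to `J = 𝐣² ∈ E`; multiplication is determined by
`𝐣² = J` and `α·𝐣 = 𝐣·ρ(α)`. -/
def Qa {E : Type*} [Field E] (ρ : E →+* E) (J : E) : Type _ := E × E

namespace Qa

variable {E : Type*} [Field E] {ρ : E →+* E} {J : E}

instance : AddCommGroup (Qa ρ J) := inferInstanceAs (AddCommGroup (E × E))
instance : Module E (Qa ρ J) := inferInstanceAs (Module E (E × E))

/-- The element `a + b·𝐣` of `B`. -/
def mk' (ρ : E →+* E) (J : E) (a b : E) : Qa ρ J := (a, b)

/-- The `E`-component of `a + b·𝐣`. -/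
def re (x : Qa ρ J) : E := Prod.fst x

/-- The `𝐣`-coefficient of `a + b·𝐣`. -/
def im (x : Qa ρ J) : E := Prod.snd x

instance : One (Qa ρ J) := ⟨mk' ρ J 1 0⟩

/-- Multiplication: `(a + b𝐣)(c + d𝐣) = (ac + J·b·ρ(d)) + (ad + b·ρ(c))·𝐣`. -/
instance : Mul (Qa ρ J) :=
  ⟨fun x y => mk' ρ J (re x * re y + J * (im x * ρ (im y))) (re x * im y + im x * ρ (re y))⟩

/-- The main involution `(a + b𝐣)^* = ρ(a) - b𝐣` of `B`. -/
def conj (x : Qa ρ J) : Qa ρ J := mk' ρ J (ρ (re x)) (-im x)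

/-- The embedding `E → B`. -/
def scalar (ρ : E →+* E) (J : E) (c : E) : Qa ρ J := mk' ρ J c 0

/-- The element `𝐣 ∈ B`. -/
def jay (ρ : E →+* E) (J : E) : Qa ρ J := mk' ρ J 0 1

end Qa



namespace Qa

variable {E : Type*} [Field E] {ρ : E →+* E} {J : E}

lemma re_sub (x y : Qa ρ J) : re (x - y) = re x - re y := rfl
lemma im_sub (x y : Qa ρ J) : im (x - y) = im x - im y := rfl
lemma re_mul (x y : Qa ρ J) : re (x * y) = re x * re y + J * (im x * ρ (im y)) := rfl
lemma im_mul (x y : Qa ρ J) : im (x * y) = re x * im y + im x * ρ (re y) := rfl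
lemma re_scalar (c : E) : re (scalar ρ J c) = c := rfl
lemma im_scalar (c : E) : im (scalar ρ J c) = 0 := rfl
lemma re_jay : re (jay ρ J) = 0 := rfl
lemma im_jay : im (jay ρ J) = 1 := rfl
lemma ext' {x y : Qa ρ J} (h1 : re x = re y) (h2 : im x = im y) : x = y := Prod.ext h1 h2

end Qa

/-- The right action of `B = E ⊕ E𝐣` on `Ṽ = ⋀²V`, where `E` acts by scalars and `x·𝐣 = L(x)`
(so `x·(a + b𝐣) = a•x + ρ(b)•L(x)`). -/
def actB {E : Type*} [Field E] (ρ : E →+* E) (J : E) {M : Type*} [AddCommGroup M] [Module E M]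
    (L : M → M) (x : M) (q : Qa ρ J) : M :=
  Qa.re q • x + ρ (Qa.im q) • L x

/-- The `B`-valued form `⟨x,y⟩ = (x,y) - J⁻¹·𝐣·(L(x),y)` on `Ṽ`, where `(x,y) = 𝐢·h₂(x,y)`. -/
noncomputable def qform {E : Type*} [Field E] (ρ : E →+* E) (J : E) (i0 : E)
    {M : Type*} [AddCommGroup M] [Module E M] (h₂ : M → M → E) (L : M → M)
    (x y : M) : Qa ρ J :=
  Qa.scalar ρ J (i0 * h₂ x y) -
    Qa.scalar ρ J J⁻¹ * Qa.jay ρ J * Qa.scalar ρ J (i0 * h₂ (L x) y)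

namespace ESH

variable (E : Type*) [Field E] {V : Type*} [AddCommGroup V] [Module E V]

/-- The wedge as a bundled alternating map into the exterior power. -/
noncomputable def wAlt (n : ℕ) : V [⋀^Fin n]→ₗ[E] (⋀[E]^n V) :=
  (ExteriorAlgebra.ιMulti E n).codRestrict (⋀[E]^n V)
    (fun v => ExteriorAlgebra.ιMulti_range E n (Set.mem_range_self v))

@[simp] lemma wAlt_apply (n : ℕ) (v : Fin n → V) : wAlt E n v = wedgeι E n v := rfl

lemma wedgeι_coe (n : ℕ) (v : Fin n → V) :
    (wedgeι E n v : ExteriorAlgebra E V) = ExteriorAlgebra.ιMulti E n v := rfl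

lemma span_wedge (n : ℕ) :
    Submodule.span E (Set.range (wedgeι E n (V := V))) = ⊤ := by
  apply Submodule.map_injective_of_injective (⋀[E]^n V).injective_subtype
  rw [Submodule.map_span, Submodule.map_top, Submodule.range_subtype, ← Set.range_comp]
  exact ExteriorAlgebra.ιMulti_span_fixedDegree E n

lemma wedge_induction {n : ℕ} (P : (⋀[E]^n V) → Prop)
    (hw : ∀ v : Fin n → V, P (wedgeι E n v)) (h0 : P 0)
    (hadd : ∀ a b, P a → P b → P (a + b))
    (hsmul : ∀ (c : E) a, P a → P (c • a)) : ∀ x, P x := by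
  intro x
  have hx : x ∈ Submodule.span E (Set.range (wedgeι E n (V := V))) := by
    rw [span_wedge]; trivial
  exact Submodule.span_induction (fun y hy => by obtain ⟨v, rfl⟩ := hy; exact hw v)
    h0 (fun a b _ _ => hadd a b) (fun c a _ => hsmul c a) hx

lemma wedge_ext {n : ℕ} {M : Type*} [AddCommGroup M] [Module E M]
    {f g : (⋀[E]^n V) →ₗ[E] M}
    (h : ∀ v : Fin n → V, f (wedgeι E n v) = g (wedgeι E n v)) : f = g := by
  apply LinearMap.ext_on (span_wedge E n)
  rintro _ ⟨v, rfl⟩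
  exact h v


/-- The wedge multiplication as a bilinear map. -/
noncomputable def wMulL : (⋀[E]^2 V) →ₗ[E] (⋀[E]^2 V) →ₗ[E] (⋀[E]^4 V) :=
  LinearMap.mk₂ E (wedgeMul E)
    (fun x x' y => Subtype.ext (by
      show ((x : ExteriorAlgebra E V) + x') * y = (x : ExteriorAlgebra E V) * y + x' * y
      exact add_mul _ _ _))
    (fun c x y => Subtype.ext (by
      show (c • (x : ExteriorAlgebra E V)) * y = c • ((x : ExteriorAlgebra E V) * y)
      exact smul_mul_assoc c _ _))
    (fun x y y' => Subtype.ext (by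
      show (x : ExteriorAlgebra E V) * (y + y') = (x : ExteriorAlgebra E V) * y + x * y'
      exact mul_add _ _ _))
    (fun c x y => Subtype.ext (by
      show (x : ExteriorAlgebra E V) * (c • y) = c • ((x : ExteriorAlgebra E V) * y)
      exact mul_smul_comm c _ _))

@[simp] lemma wMulL_apply (x y : ⋀[E]^2 V) : wMulL E x y = wedgeMul E x y := rfl

lemma wedge2_coe (v : Fin 2 → V) :
    (wedgeι E 2 v : ExteriorAlgebra E V) =
      ExteriorAlgebra.ι E (v 0) * ExteriorAlgebra.ι E (v 1) := by
  rw [wedgeι_coe, ExteriorAlgebra.ιMulti_apply]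
  simp [List.ofFn_succ]

lemma wedge4_coe (v : Fin 4 → V) :
    (wedgeι E 4 v : ExteriorAlgebra E V) =
      ExteriorAlgebra.ι E (v 0) * ExteriorAlgebra.ι E (v 1) *
      ExteriorAlgebra.ι E (v 2) * ExteriorAlgebra.ι E (v 3) := by
  rw [wedgeι_coe, ExteriorAlgebra.ιMulti_apply]
  simp [List.ofFn_succ, mul_assoc, show (Fin.succ 2 : Fin 4) = 3 from rfl]

lemma wedgeMul_wedge (u w : Fin 2 → V) :
    wedgeMul E (wedgeι E 2 u) (wedgeι E 2 w) = wedgeι E 4 ![u 0, u 1, w 0, w 1] := by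
  apply Subtype.ext
  show (wedgeι E 2 u : ExteriorAlgebra E V) * (wedgeι E 2 w) = _
  rw [wedge2_coe, wedge2_coe, wedge4_coe]
  simp [mul_assoc]


lemma wedge_expand {N : ℕ} (b : Module.Basis (Fin N) E V) (n : ℕ) (v : Fin n → V) :
    wedgeι E n v = ∑ f : Fin n → Fin N,
      (∏ i, b.repr (v i) (f i)) • wedgeι E n (fun i => b (f i)) := by
  have hv : v = fun i => ∑ j : Fin N, b.repr (v i) j • b j := by
    funext i; exact (b.sum_repr (v i)).symm
  have step1 : wedgeι E n v =
      ∑ f ∈ Fintype.piFinset (fun _ : Fin n => (Finset.univ : Finset (Fin N))),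
        (wAlt E n).toMultilinearMap (fun i => b.repr (v i) (f i) • b (f i)) := by
    conv_lhs => rw [← wAlt_apply, hv]
    exact (wAlt E n).toMultilinearMap.map_sum_finset
      (fun i j => b.repr (v i) j • b j) (fun _ => Finset.univ)
  rw [step1, Fintype.piFinset_univ]
  refine Finset.sum_congr rfl (fun f _ => ?_)
  rw [(wAlt E n).toMultilinearMap.map_smul_univ (fun i => b.repr (v i) (f i))
    (fun i => b (f i))]
  rfl

lemma wedge_mem_span_basis {N : ℕ} (b : Module.Basis (Fin N) E V) (n : ℕ) (v : Fin n → V) :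
    wedgeι E n v ∈ Submodule.span E
      (Set.range (fun f : Fin n → Fin N => wedgeι E n (fun i => b (f i)))) := by
  rw [wedge_expand E b n v]
  exact Submodule.sum_mem _ fun f _ =>
    Submodule.smul_mem _ _ (Submodule.subset_span ⟨f, rfl⟩)

lemma wedge_noninj {n : ℕ} {v : Fin n → V} {i j : Fin n}
    (h : v i = v j) (hne : i ≠ j) : wedgeι E n v = 0 := by
  rw [← wAlt_apply]; exact (wAlt E n).map_eq_zero_of_eq v h hne

lemma wedge_perm {n : ℕ} (v : Fin n → V) (σ : Equiv.Perm (Fin n)) :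
    wedgeι E n (v ∘ σ) = Equiv.Perm.sign σ • wedgeι E n v := by
  rw [← wAlt_apply, ← wAlt_apply]; exact (wAlt E n).map_perm v σ

lemma sign_smul_cases {M : Type*} [AddCommGroup M] [Module E M] {n : ℕ}
    (σ : Equiv.Perm (Fin n)) (x : M) :
    (Equiv.Perm.sign σ • x : M) = x ∨ (Equiv.Perm.sign σ • x : M) = -x := by
  rcases Int.units_eq_one_or (Equiv.Perm.sign σ) with h | h <;> rw [h]
  · left; exact one_smul _ x
  · right
    rw [Units.smul_def]
    push_cast
    exact neg_one_zsmul x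

lemma top_mem_span (b : Module.Basis (Fin 4) E V) (f : Fin 4 → Fin 4) :
    wedgeι E 4 (fun i => b (f i)) ∈ Submodule.span E {wedgeι E 4 ⇑b} := by
  by_cases hf : Function.Injective f
  · have hbij : Function.Bijective f := Finite.injective_iff_bijective.1 hf
    have hσ : (fun i => b (f i)) = ⇑b ∘ ⇑(Equiv.ofBijective f hbij) := by
      funext i; simp [Equiv.ofBijective]
    rw [hσ, wedge_perm]
    rcases sign_smul_cases E (Equiv.ofBijective f hbij) (wedgeι E 4 ⇑b) with h | h <;> rw [h]
    · exact Submodule.subset_span (Set.mem_singleton _)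
    · exact Submodule.neg_mem _ (Submodule.subset_span (Set.mem_singleton _))
  · obtain ⟨i, j, hij, hne⟩ := Function.not_injective_iff.1 hf
    rw [wedge_noninj E (v := fun i => b (f i)) (congrArg b hij) hne]
    exact Submodule.zero_mem _

lemma top_span (b : Module.Basis (Fin 4) E V) :
    (⊤ : Submodule E (⋀[E]^4 V)) ≤ Submodule.span E {wedgeι E 4 ⇑b} := by
  rw [← span_wedge E 4, Submodule.span_le]
  rintro _ ⟨v, rfl⟩
  refine Submodule.span_le.2 ?_ (wedge_mem_span_basis E b 4 v)
  rintro _ ⟨f, rfl⟩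
  exact top_mem_span E b f

lemma d_top_ne (d : (⋀[E]^4 V) ≃ₗ[E] E) (b : Module.Basis (Fin 4) E V) :
    d (wedgeι E 4 ⇑b) ≠ 0 := by
  intro h0
  have hT : wedgeι E 4 ⇑b = 0 := d.map_eq_zero_iff.mp h0
  have h1 : d.symm 1 ∈ Submodule.span E {wedgeι E 4 (V := V) ⇑b} := top_span E b trivial
  rw [hT, Submodule.span_zero_singleton, Submodule.mem_bot] at h1
  have h2 := congrArg d h1
  rw [d.apply_symm_apply, map_zero] at h2
  exact one_ne_zero h2

lemma d_wedge_inj_ne (d : (⋀[E]^4 V) ≃ₗ[E] E) (b : Module.Basis (Fin 4) E V)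
    {m : Fin 4 → Fin 4} (hm : Function.Injective m) :
    d (wedgeι E 4 (fun i => b (m i))) ≠ 0 := by
  have hbij : Function.Bijective m := Finite.injective_iff_bijective.1 hm
  have hσ : (fun i => b (m i)) = ⇑b ∘ ⇑(Equiv.ofBijective m hbij) := by
    funext i; simp [Equiv.ofBijective]
  rw [hσ, wedge_perm]
  rcases sign_smul_cases E (Equiv.ofBijective m hbij) (wedgeι E 4 ⇑b) with h | h <;> rw [h]
  · exact d_top_ne E d b
  · rw [map_neg]
    exact neg_ne_zero.2 (d_top_ne E d b)


/-- Index type of strictly increasing pairs in `Fin 4`. -/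
def I6 : Type := {p : Fin 4 × Fin 4 // p.1 < p.2}

instance : Fintype I6 := inferInstanceAs (Fintype {p : Fin 4 × Fin 4 // p.1 < p.2})
instance : DecidableEq I6 := inferInstanceAs (DecidableEq {p : Fin 4 × Fin 4 // p.1 < p.2})

def quad (p q : I6) : Fin 4 → Fin 4 := ![p.1.1, p.1.2, q.1.1, q.1.2]

lemma quad_key : ∀ p : I6, ∃ q : I6, Function.Injective (quad p q) ∧
    ∀ p' : I6, p' ≠ p → ¬ Function.Injective (quad p' q) := by decide

lemma b_quad (b : Module.Basis (Fin 4) E V) (p q : I6) :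
    (fun i => b (quad p q i)) = ![b p.1.1, b p.1.2, b q.1.1, b q.1.2] := by
  funext i
  fin_cases i <;> simp [quad]

lemma wedgeMul_W6 (b : Module.Basis (Fin 4) E V) (p q : I6) :
    wedgeMul E (wedgeι E 2 ![b p.1.1, b p.1.2]) (wedgeι E 2 ![b q.1.1, b q.1.2]) =
      wedgeι E 4 (fun i => b (quad p q i)) := by
  rw [wedgeMul_wedge, b_quad]
  norm_num

lemma wedge_pairing_nondeg (d : (⋀[E]^4 V) ≃ₗ[E] E) (b : Module.Basis (Fin 4) E V)
    (z : ⋀[E]^2 V) (hz : ∀ y, wedgeMul E z y = 0) : z = 0 := by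
  set W6 : I6 → (⋀[E]^2 V) := fun p => wedgeι E 2 ![b p.1.1, b p.1.2] with hW6
  have hspan : z ∈ Submodule.span E (Set.range W6) := by
    have htop : (⊤ : Submodule E (⋀[E]^2 V)) ≤ Submodule.span E (Set.range W6) := by
      rw [← span_wedge E 2, Submodule.span_le]
      rintro _ ⟨v, rfl⟩
      refine Submodule.span_le.2 ?_ (wedge_mem_span_basis E b 2 v)
      rintro _ ⟨f, rfl⟩
      show wedgeι E 2 (fun i => b (f i)) ∈ _
      rcases lt_trichotomy (f 0) (f 1) with hlt | heq | hgt
      · have : (fun i => b (f i)) = ![b (f 0), b (f 1)] := by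
          funext i; fin_cases i <;> simp
        rw [this]
        exact Submodule.subset_span ⟨⟨(f 0, f 1), hlt⟩, rfl⟩
      · rw [wedge_noninj E (v := fun i => b (f i)) (i := 0) (j := 1)
          (congrArg b heq) (by decide)]
        exact Submodule.zero_mem _
      · have hsw : (fun i => b (f i)) = ![b (f 1), b (f 0)] ∘ ⇑(Equiv.swap (0 : Fin 2) 1) := by
          funext i; fin_cases i <;> simp [Equiv.swap_apply_left, Equiv.swap_apply_right]
        rw [hsw, ← wAlt_apply, (wAlt E 2).map_swap _ (by decide : (0 : Fin 2) ≠ 1), wAlt_apply]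
        exact Submodule.neg_mem _ (Submodule.subset_span ⟨⟨(f 1, f 0), hgt⟩, rfl⟩)
    exact htop trivial
  obtain ⟨c, hc⟩ := (Submodule.mem_span_range_iff_exists_fun E).1 hspan
  have hcoeff : ∀ p : I6, c p = 0 := by
    intro p
    obtain ⟨q, hqinj, hqkill⟩ := quad_key p
    have h0 : wedgeMul E z (W6 q) = 0 := hz _
    rw [← hc] at h0
    have hexp : wedgeMul E (∑ p', c p' • W6 p') (W6 q)
        = ∑ p', c p' • wedgeMul E (W6 p') (W6 q) := by
      rw [← wMulL_apply, map_sum, LinearMap.sum_apply]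
      refine Finset.sum_congr rfl (fun p' _ => ?_)
      rw [map_smul, LinearMap.smul_apply, wMulL_apply]
    rw [hexp] at h0
    have hsingle : ∑ p', c p' • wedgeMul E (W6 p') (W6 q)
        = c p • wedgeMul E (W6 p) (W6 q) := by
      refine Finset.sum_eq_single p (fun p' _ hne => ?_) (fun h => absurd (Finset.mem_univ p) h)
      have hz' : wedgeMul E (W6 p') (W6 q) = 0 := by
        rw [hW6, wedgeMul_W6]
        obtain ⟨i, j, hij, hne'⟩ := Function.not_injective_iff.1 (hqkill p' hne)
        exact wedge_noninj E (v := fun i => b (quad p' q i)) (congrArg b hij) hne'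
      rw [hz', smul_zero]
    rw [hsingle] at h0
    have hnz : wedgeMul E (W6 p) (W6 q) ≠ 0 := by
      rw [hW6, wedgeMul_W6]
      intro hcontra
      exact d_wedge_inj_ne E d b hqinj (by rw [hcontra, map_zero])
    rcases smul_eq_zero.1 h0 with h | h
    · exact h
    · exact absurd h hnz
  rw [← hc]
  simp [hcoeff]


lemma wedgeMul_zero_left (y : ⋀[E]^2 V) : wedgeMul E 0 y = 0 := by
  apply Subtype.ext
  show ((0 : ⋀[E]^2 V) : ExteriorAlgebra E V) * y = ((0 : ⋀[E]^4 V) : ExteriorAlgebra E V)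
  rw [ZeroMemClass.coe_zero, ZeroMemClass.coe_zero, zero_mul]

lemma indep_wedge_ne [FiniteDimensional E V] (d : (⋀[E]^4 V) ≃ₗ[E] E)
    (hV4 : Module.finrank E V = 4) {a u : V}
    (h : LinearIndependent E ![a, u]) : wedgeι E 2 ![a, u] ≠ 0 := by
  have hs : LinearIndepOn E id (Set.range ![a, u]) := (linearIndepOn_id_range_iff h.injective).mpr h
  let C := Module.Basis.extend hs
  haveI : Fintype (hs.extend (Set.subset_univ (Set.range ![a, u]))) :=
    FiniteDimensional.fintypeBasisIndex C
  have hcard : Fintype.card (hs.extend (Set.subset_univ (Set.range ![a, u]))) = 4 := by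
    rw [← Module.finrank_eq_card_basis C, hV4]
  let e := Fintype.equivFinOfCardEq hcard
  let c : Module.Basis (Fin 4) E V := C.reindex e
  have hc : ∀ i : hs.extend (Set.subset_univ (Set.range ![a, u])), c (e i) = (i : V) := by
    intro i
    show C.reindex e (e i) = _
    rw [Module.Basis.reindex_apply, Equiv.symm_apply_apply]
    exact Module.Basis.extend_apply_self hs i
  have hat : a ∈ hs.extend (Set.subset_univ (Set.range ![a, u])) :=
    hs.subset_extend _ ⟨0, rfl⟩
  have hut : u ∈ hs.extend (Set.subset_univ (Set.range ![a, u])) :=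
    hs.subset_extend _ ⟨1, rfl⟩
  have hne_au : a ≠ u := by
    intro hh
    have h01 := h.injective (show ![a, u] 0 = ![a, u] 1 by simp [hh])
    exact absurd h01 (by decide)
  set ia := e ⟨a, hat⟩ with hia_def
  set iu := e ⟨u, hut⟩ with hiu_def
  have hia : c ia = a := hc ⟨a, hat⟩
  have hiu : c iu = u := hc ⟨u, hut⟩
  have hiaiu : ia ≠ iu := by
    intro hh
    exact hne_au (by rw [← hia, ← hiu, hh])
  have hcard2 : 1 < (({ia, iu} : Finset (Fin 4))ᶜ).card := by
    rw [Finset.card_compl]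
    rw [Finset.card_insert_of_notMem (by simp [hiaiu]), Finset.card_singleton]
    norm_num
  obtain ⟨j0, hj0, j1, hj1, hj01⟩ := Finset.one_lt_card.1 hcard2
  have hj0' : j0 ≠ ia ∧ j0 ≠ iu := by
    constructor <;> (intro hh; apply Finset.mem_compl.1 hj0; simp [hh])
  have hj1' : j1 ≠ ia ∧ j1 ≠ iu := by
    constructor <;> (intro hh; apply Finset.mem_compl.1 hj1; simp [hh])
  have hm : Function.Injective ![ia, iu, j0, j1] := by
    have h1 := hj0'.1; have h2 := hj0'.2; have h3 := hj1'.1; have h4 := hj1'.2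
    intro x y hxy
    fin_cases x <;> fin_cases y <;> simp_all
  intro h0
  have hfun : (fun i => c (![ia, iu, j0, j1] i)) = ![a, u, c j0, c j1] := by
    funext i
    fin_cases i <;> simp [hia, hiu]
  have hMul : wedgeMul E (wedgeι E 2 ![a, u]) (wedgeι E 2 ![c j0, c j1])
      = wedgeι E 4 (fun i => c (![ia, iu, j0, j1] i)) := by
    rw [hfun, wedgeMul_wedge]
    norm_num
  rw [h0, wedgeMul_zero_left] at hMul
  exact d_wedge_inj_ne E d c hm (by rw [← hMul, map_zero])

end ESH

/-- Let `GSU(V,H) = {g ∈ GU(V,H) : det g = ν(g)²}`. For `g ∈ GSU(V,H)`, the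
map `⋀²g` commutes with `L`, hence is a right-`B`-linear automorphism of `Ṽ = ⋀²V`, and scales
the `B`-skew-hermitian form by `ν(g)²`. The map `g ↦ ⋀²g` is a group homomorphism
`GSU(V,H) → GU_B(Ṽ)` whose kernel is `{±id}`. -/
theorem exterior_square_on_GSU
    {F E : Type*} [Field F] [CharZero F] [Field E] [Algebra F E]
    (hquad : Module.finrank F E = 2)
    (ρ : E →+* E) (hρ_invol : ∀ a, ρ (ρ a) = a) (hρ_ne : ρ ≠ RingHom.id E)
    (hρ_fixF : ∀ c : F, ρ (algebraMap F E c) = algebraMap F E c)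
    (hρ_fixed_field : ∀ a : E, ρ a = a → ∃ c : F, algebraMap F E c = a)
    {V : Type*} [AddCommGroup V] [Module E V] [FiniteDimensional E V]
    (hV4 : Module.finrank E V = 4)
    (H : V → V → E)
    (H_add_left : ∀ x y z, H (x + y) z = H x z + H y z)
    (H_add_right : ∀ x y z, H x (y + z) = H x y + H x z)
    (H_smul : ∀ (a b : E) (x y : V), H (a • x) (b • y) = ρ a * H x y * b)
    (H_conj : ∀ x y, H x y = ρ (H y x))
    (H_nondeg : ∀ x, (∀ y, H x y = 0) → x = 0)
    (d : (⋀[E]^4 V) ≃ₗ[E] E)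
    (h₂ : (⋀[E]^2 V) → (⋀[E]^2 V) → E) (hh₂ : IsDetForm ρ H 2 h₂)
    (L : (⋀[E]^2 V) → (⋀[E]^2 V))
    (L_add : ∀ x y, L (x + y) = L x + L y)
    (L_smul : ∀ (a : E) (x : ⋀[E]^2 V), L (a • x) = ρ a • L x)
    (L_def : ∀ x y : ⋀[E]^2 V, d (wedgeMul E (L x) y) = h₂ x y)
    (J : F) (hJ0 : J ≠ 0)
    (hLL : ∀ x : ⋀[E]^2 V, L (L x) = algebraMap F E J • x)
    (i0 : E) (hi0_ne : i0 ≠ 0) (hi0_trace : ρ i0 = -i0) :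
    ∀ (g : V ≃ₗ[E] V) (ν : F), ν ≠ 0 →
      (∀ x y, H (g x) (g y) = algebraMap F E ν * H x y) →
      LinearMap.det (g : V →ₗ[E] V) = algebraMap F E ν ^ 2 →
      ∀ Λg : (⋀[E]^2 V) →ₗ[E] (⋀[E]^2 V),
        (∀ v : Fin 2 → V, Λg (wedgeι E 2 v) = wedgeι E 2 (⇑g ∘ v)) →
        (∀ x, Λg (L x) = L (Λg x)) ∧
        (∀ (x : ⋀[E]^2 V) (q : Qa ρ (algebraMap F E J)),
          Λg (actB ρ (algebraMap F E J) L x q) = actB ρ (algebraMap F E J) L (Λg x) q) ∧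
        Function.Bijective Λg ∧
        (∀ x y : ⋀[E]^2 V,
          qform ρ (algebraMap F E J) i0 h₂ L (Λg x) (Λg y) =
            Qa.scalar ρ (algebraMap F E J) (algebraMap F E ν ^ 2) *
              qform ρ (algebraMap F E J) i0 h₂ L x y) ∧
        (∀ (g' : V ≃ₗ[E] V) (ν' : F), ν' ≠ 0 →
          (∀ x y, H (g' x) (g' y) = algebraMap F E ν' * H x y) →
          LinearMap.det (g' : V →ₗ[E] V) = algebraMap F E ν' ^ 2 →
          ∀ Λg' Λgg' : (⋀[E]^2 V) →ₗ[E] (⋀[E]^2 V),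
            (∀ v : Fin 2 → V, Λg' (wedgeι E 2 v) = wedgeι E 2 (⇑g' ∘ v)) →
            (∀ v : Fin 2 → V, Λgg' (wedgeι E 2 v) = wedgeι E 2 (⇑g ∘ ⇑g' ∘ v)) →
            ∀ x, Λgg' x = Λg (Λg' x)) ∧
        ((∀ x, Λg x = x) ↔ ((∀ u, g u = u) ∨ (∀ u, g u = -u))) := by

  intro g ν hν hgH hdet Λg hΛ
  classical
  obtain ⟨h2addl, h2addr, h2smul, h2conj, h2det⟩ := hh₂
  set κJ := algebraMap F E J with hκJdef
  set κν := algebraMap F E ν with hκνdef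
  let b : Module.Basis (Fin 4) E V := Module.finBasisOfFinrankEq E V hV4
  -- basic h₂ facts
  have h2sl : ∀ (a : E) x y, h₂ (a • x) y = ρ a * h₂ x y := by
    intro a x y; have := h2smul a 1 x y; rwa [one_smul, mul_one] at this
  have h2sr : ∀ (a : E) x y, h₂ x (a • y) = h₂ x y * a := by
    intro a x y; have := h2smul 1 a x y; rwa [one_smul, map_one, one_mul] at this
  have h2zl : ∀ y, h₂ 0 y = 0 := by
    intro y
    have := h2addl 0 0 y
    rw [add_zero] at this
    exact (left_eq_add.1 this)
  have h2zr : ∀ x, h₂ x 0 = 0 := by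
    intro x
    have := h2addr x 0 0
    rw [add_zero] at this
    exact (left_eq_add.1 this)
  -- S1 : determinant scaling on the top exterior power
  have S1 : ∀ v : Fin 4 → V,
      d (wedgeι E 4 (⇑g ∘ v)) = κν ^ 2 * d (wedgeι E 4 v) := by
    intro v
    set Φ : V [⋀^Fin 4]→ₗ[E] E :=
      (d : (⋀[E]^4 V) →ₗ[E] E).compAlternatingMap (ESH.wAlt E 4) with hΦdef
    have hΦ : ∀ u : Fin 4 → V, Φ u = d (wedgeι E 4 u) := fun u => rfl
    have heq := Φ.eq_smul_basis_det b
    have happ : ∀ w : Fin 4 → V, Φ w = Φ ⇑b * Module.Basis.det b w := by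
      intro w
      conv_lhs => rw [heq]
      rw [AlternatingMap.smul_apply, smul_eq_mul]
    have e2 : Module.Basis.det b (⇑g ∘ v) = κν ^ 2 * Module.Basis.det b v := by
      have hco : ⇑g ∘ v = ⇑(g : V →ₗ[E] V) ∘ v := rfl
      rw [hco, Module.Basis.det_comp, hdet]
    rw [← hΦ, ← hΦ, happ (⇑g ∘ v), happ v, e2]
    ring
  -- S2 : Λg is bijective
  have mapmem : ∀ (h : V →ₗ[E] V) (x : ExteriorAlgebra E V), x ∈ (⋀[E]^2 V) →
      ExteriorAlgebra.map h x ∈ ⋀[E]^2 V := by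
    intro h x hx
    rw [← ExteriorAlgebra.ιMulti_span_fixedDegree] at hx
    refine Submodule.span_induction ?_ ?_ ?_ ?_ hx
    · rintro _ ⟨v, rfl⟩
      rw [ExteriorAlgebra.map_apply_ιMulti]
      exact ExteriorAlgebra.ιMulti_range E 2 (Set.mem_range_self _)
    · rw [map_zero]; exact Submodule.zero_mem _
    · intro x' y' _ _ hx' hy'; rw [map_add]; exact Submodule.add_mem _ hx' hy'
    · intro c x' _ hx'; rw [map_smul]; exact Submodule.smul_mem _ _ hx'
  let Λi : (⋀[E]^2 V) →ₗ[E] (⋀[E]^2 V) :=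
    ((ExteriorAlgebra.map (g.symm : V →ₗ[E] V)).toLinearMap).restrict
      (fun x hx => mapmem _ x hx)
  have hΛi : ∀ v : Fin 2 → V, Λi (wedgeι E 2 v) = wedgeι E 2 (⇑g.symm ∘ v) := by
    intro v
    apply Subtype.ext
    show (ExteriorAlgebra.map (g.symm : V →ₗ[E] V)) (ExteriorAlgebra.ιMulti E 2 v)
      = ExteriorAlgebra.ιMulti E 2 (⇑g.symm ∘ v)
    rw [ExteriorAlgebra.map_apply_ιMulti]
    rfl
  have hli : ∀ x, Λi (Λg x) = x := by
    have hcomp : Λi ∘ₗ Λg = LinearMap.id := by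
      apply ESH.wedge_ext E
      intro v
      rw [LinearMap.comp_apply, hΛ, hΛi, LinearMap.id_apply]
      congr 1
      funext i
      exact g.symm_apply_apply (v i)
    intro x
    exact DFunLike.congr_fun hcomp x
  have hri : ∀ x, Λg (Λi x) = x := by
    have hcomp : Λg ∘ₗ Λi = LinearMap.id := by
      apply ESH.wedge_ext E
      intro v
      rw [LinearMap.comp_apply, hΛi, hΛ, LinearMap.id_apply]
      congr 1
      funext i
      exact g.apply_symm_apply (v i)
    intro x
    exact DFunLike.congr_fun hcomp x
  have S2 : Function.Bijective Λg :=
    ⟨Function.LeftInverse.injective hli, Function.RightInverse.surjective hri⟩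
  -- S3 : scaling of h₂
  have S3 : ∀ x y, h₂ (Λg x) (Λg y) = κν ^ 2 * h₂ x y := by
    have base : ∀ v w : Fin 2 → V,
        h₂ (Λg (wedgeι E 2 v)) (Λg (wedgeι E 2 w)) =
          κν ^ 2 * h₂ (wedgeι E 2 v) (wedgeι E 2 w) := by
      intro v w
      rw [hΛ, hΛ, h2det, h2det]
      have hM : (Matrix.of fun i j => H ((⇑g ∘ v) i) ((⇑g ∘ w) j))
          = κν • (Matrix.of fun i j => H (v i) (w j)) := by
        ext i j
        simp only [Matrix.smul_apply, Matrix.of_apply, smul_eq_mul, Function.comp_apply]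
        exact hgH (v i) (w j)
      rw [hM, Matrix.det_smul]
      norm_num
    refine ESH.wedge_induction E
      (fun x => ∀ y, h₂ (Λg x) (Λg y) = κν ^ 2 * h₂ x y) ?_ ?_ ?_ ?_
    · intro v
      refine ESH.wedge_induction E
        (fun y => h₂ (Λg (wedgeι E 2 v)) (Λg y) = κν ^ 2 * h₂ (wedgeι E 2 v) y) ?_ ?_ ?_ ?_
      · intro w; exact base v w
      · beta_reduce
        rw [map_zero, h2zr, h2zr, mul_zero]
      · intro y z hy hz
        beta_reduce at hy hz ⊢
        rw [map_add, h2addr, h2addr, hy, hz, mul_add]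
      · intro c y hy
        beta_reduce at hy ⊢
        rw [map_smul, h2sr, h2sr, hy]
        ring
    · intro y
      beta_reduce
      rw [map_zero, h2zl, h2zl, mul_zero]
    · intro x x' hx hx' y
      rw [map_add, h2addl, h2addl, hx, hx', mul_add]
    · intro c x hx y
      rw [map_smul, h2sl, h2sl, hx]
      ring
  -- wedgeMul linearity helpers
  have wmaddl : ∀ x x' y : ⋀[E]^2 V,
      wedgeMul E (x + x') y = wedgeMul E x y + wedgeMul E x' y := by
    intro x x' y
    rw [← ESH.wMulL_apply, map_add, LinearMap.add_apply, ESH.wMulL_apply, ESH.wMulL_apply]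
  have wmaddr : ∀ x y y' : ⋀[E]^2 V,
      wedgeMul E x (y + y') = wedgeMul E x y + wedgeMul E x y' := by
    intro x y y'
    rw [← ESH.wMulL_apply, map_add, ESH.wMulL_apply, ESH.wMulL_apply]
  have wmsmull : ∀ (c : E) (x y : ⋀[E]^2 V),
      wedgeMul E (c • x) y = c • wedgeMul E x y := by
    intro c x y
    rw [← ESH.wMulL_apply, map_smul, LinearMap.smul_apply, ESH.wMulL_apply]
  have wmsmulr : ∀ (c : E) (x y : ⋀[E]^2 V),
      wedgeMul E x (c • y) = c • wedgeMul E x y := by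
    intro c x y
    rw [← ESH.wMulL_apply, map_smul, ESH.wMulL_apply]
  have wm0r : ∀ x : ⋀[E]^2 V, wedgeMul E x 0 = 0 := by
    intro x
    rw [← ESH.wMulL_apply, map_zero]
  have wm0l : ∀ y : ⋀[E]^2 V, wedgeMul E 0 y = 0 := fun y => ESH.wedgeMul_zero_left E y
  -- S4 : scaling of the wedge pairing
  have S4 : ∀ x y : ⋀[E]^2 V,
      d (wedgeMul E (Λg x) (Λg y)) = κν ^ 2 * d (wedgeMul E x y) := by
    have base : ∀ v w : Fin 2 → V,
        d (wedgeMul E (Λg (wedgeι E 2 v)) (Λg (wedgeι E 2 w))) =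
          κν ^ 2 * d (wedgeMul E (wedgeι E 2 v) (wedgeι E 2 w)) := by
      intro v w
      rw [hΛ, hΛ, ESH.wedgeMul_wedge, ESH.wedgeMul_wedge]
      have hq : (![(⇑g ∘ v) 0, (⇑g ∘ v) 1, (⇑g ∘ w) 0, (⇑g ∘ w) 1])
          = ⇑g ∘ ![v 0, v 1, w 0, w 1] := by
        funext i; fin_cases i <;> rfl
      rw [hq, S1]
    refine ESH.wedge_induction E
      (fun x => ∀ y, d (wedgeMul E (Λg x) (Λg y)) = κν ^ 2 * d (wedgeMul E x y)) ?_ ?_ ?_ ?_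
    · intro v
      refine ESH.wedge_induction E
        (fun y => d (wedgeMul E (Λg (wedgeι E 2 v)) (Λg y)) =
          κν ^ 2 * d (wedgeMul E (wedgeι E 2 v) y)) ?_ ?_ ?_ ?_
      · intro w; exact base v w
      · beta_reduce
        rw [map_zero, wm0r, wm0r, map_zero, mul_zero]
      · intro y z hy hz
        beta_reduce at hy hz ⊢
        rw [map_add, wmaddr, wmaddr, map_add, map_add, hy, hz, mul_add]
      · intro c y hy
        beta_reduce at hy ⊢
        rw [map_smul, wmsmulr, wmsmulr, map_smul, map_smul, smul_eq_mul, smul_eq_mul, hy]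
        ring
    · intro y
      beta_reduce
      rw [map_zero, wm0l, wm0l, map_zero, mul_zero]
    · intro x x' hx hx' y
      beta_reduce at hx hx' ⊢
      rw [map_add, wmaddl, wmaddl, map_add, map_add, hx, hx', mul_add]
    · intro c x hx y
      beta_reduce at hx ⊢
      rw [map_smul, wmsmull, wmsmull, map_smul, map_smul, smul_eq_mul, smul_eq_mul, hx]
      ring
  -- S5 : Λg commutes with L
  have S5 : ∀ x, Λg (L x) = L (Λg x) := by
    intro x
    have key : ∀ y, wedgeMul E (Λg (L x) - L (Λg x)) y = 0 := by
      intro y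
      obtain ⟨y', rfl⟩ := S2.2 y
      have e1 : d (wedgeMul E (Λg (L x)) (Λg y')) = κν ^ 2 * h₂ x y' := by
        rw [S4, L_def]
      have e2 : d (wedgeMul E (L (Λg x)) (Λg y')) = κν ^ 2 * h₂ x y' := by
        rw [L_def, S3]
      have e3 : wedgeMul E (Λg (L x)) (Λg y') = wedgeMul E (L (Λg x)) (Λg y') :=
        d.injective (by rw [e1, e2])
      have e4 : wedgeMul E (Λg (L x) - L (Λg x)) (Λg y')
          = wedgeMul E (Λg (L x)) (Λg y') - wedgeMul E (L (Λg x)) (Λg y') := by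
        rw [← ESH.wMulL_apply, map_sub, LinearMap.sub_apply, ESH.wMulL_apply, ESH.wMulL_apply]
      rw [e4, e3, sub_self]
    exact sub_eq_zero.1 (ESH.wedge_pairing_nondeg E d b _ key)
  -- S7 : B-linearity
  have S7 : ∀ (x : ⋀[E]^2 V) (q : Qa ρ κJ),
      Λg (actB ρ κJ L x q) = actB ρ κJ L (Λg x) q := by
    intro x q
    unfold actB
    rw [map_add, map_smul, map_smul, S5]
  -- S8 : scaling of the B-valued form
  have S8 : ∀ x y : ⋀[E]^2 V,
      qform ρ κJ i0 h₂ L (Λg x) (Λg y) =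
        Qa.scalar ρ κJ (κν ^ 2) * qform ρ κJ i0 h₂ L x y := by
    intro x y
    have hρν : ρ (κν ^ 2) = κν ^ 2 := by
      rw [map_pow, hκνdef, hρ_fixF]
    apply Qa.ext'
    · simp only [qform, Qa.re_sub, Qa.re_mul, Qa.im_mul, Qa.re_scalar, Qa.im_scalar,
        Qa.re_jay, Qa.im_jay, map_zero, map_one, mul_zero, zero_mul, mul_one,
        add_zero, zero_add, sub_zero, Qa.im_sub, zero_sub, map_neg, mul_neg, neg_zero]
      rw [S3]
      ring
    · simp only [qform, Qa.re_sub, Qa.re_mul, Qa.im_mul, Qa.re_scalar, Qa.im_scalar,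
        Qa.re_jay, Qa.im_jay, map_zero, map_one, mul_zero, zero_mul, mul_one,
        add_zero, zero_add, sub_zero, Qa.im_sub, zero_sub, map_neg, mul_neg, neg_zero]
      rw [← S5, S3, map_mul, map_mul, map_mul, hρν]
      ring
  -- S9 : functoriality
  have S9 : ∀ (g' : V ≃ₗ[E] V) (ν' : F), ν' ≠ 0 →
      (∀ x y, H (g' x) (g' y) = algebraMap F E ν' * H x y) →
      LinearMap.det (g' : V →ₗ[E] V) = algebraMap F E ν' ^ 2 →
      ∀ Λg' Λgg' : (⋀[E]^2 V) →ₗ[E] (⋀[E]^2 V),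
        (∀ v : Fin 2 → V, Λg' (wedgeι E 2 v) = wedgeι E 2 (⇑g' ∘ v)) →
        (∀ v : Fin 2 → V, Λgg' (wedgeι E 2 v) = wedgeι E 2 (⇑g ∘ ⇑g' ∘ v)) →
        ∀ x, Λgg' x = Λg (Λg' x) := by
    intro g' ν' _ _ _ Λg' Λgg' hΛ' hΛ'' x
    have hcomp : Λgg' = Λg ∘ₗ Λg' := by
      apply ESH.wedge_ext E
      intro v
      rw [hΛ'', LinearMap.comp_apply, hΛ', hΛ]
    rw [hcomp]
    rfl
  -- S10 : kernel
  have S10 : (∀ x, Λg x = x) ↔ ((∀ u, g u = u) ∨ (∀ u, g u = -u)) := by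
    constructor
    · intro hid
      have hstar : ∀ v : Fin 2 → V, wedgeι E 2 (⇑g ∘ v) = wedgeι E 2 v := by
        intro v; rw [← hΛ v, hid]
      have claim1 : ∀ u : V, ∃ c : E, g u = c • u := by
        intro u
        by_cases hu : u = 0
        · exact ⟨0, by simp [hu]⟩
        by_cases hsp : ∃ c : E, g u = c • u
        · exact hsp
        exfalso
        have haux : ∀ w : V, ExteriorAlgebra.ι E (g u) * ExteriorAlgebra.ι E (g w)
            = ExteriorAlgebra.ι E u * ExteriorAlgebra.ι E w := by
          intro w
          have h1 := congrArg Subtype.val (hstar ![u, w])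
          rw [ESH.wedge2_coe, ESH.wedge2_coe] at h1
          simpa using h1
        have haux2 : ∀ w : V, ExteriorAlgebra.ι E (g u) * ExteriorAlgebra.ι E u
            * ExteriorAlgebra.ι E w = 0 := by
          intro w
          rw [mul_assoc, ← haux w, ← mul_assoc, ExteriorAlgebra.ι_sq_zero, zero_mul]
        have hw0 : ∀ y, wedgeMul E (wedgeι E 2 ![g u, u]) y = 0 := by
          have hmap : ESH.wMulL E (wedgeι E 2 ![g u, u]) = 0 := by
            apply ESH.wedge_ext E
            intro v
            rw [LinearMap.zero_apply, ESH.wMulL_apply]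
            apply Subtype.ext
            show ((wedgeι E 2 ![g u, u] : ⋀[E]^2 V) : ExteriorAlgebra E V)
              * ((wedgeι E 2 v : ⋀[E]^2 V) : ExteriorAlgebra E V)
              = ((0 : ⋀[E]^4 V) : ExteriorAlgebra E V)
            rw [ESH.wedge2_coe, ESH.wedge2_coe, ZeroMemClass.coe_zero]
            have : (![g u, u] : Fin 2 → V) 0 = g u := rfl
            rw [this]
            have : (![g u, u] : Fin 2 → V) 1 = u := rfl
            rw [this, ← mul_assoc, haux2, zero_mul]
          intro y
          rw [← ESH.wMulL_apply, hmap, LinearMap.zero_apply]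
        have hzero := ESH.wedge_pairing_nondeg E d b _ hw0
        have hind : LinearIndependent E ![g u, u] :=
          linearIndependent_fin2.2 ⟨hu, fun a ha => hsp ⟨a, ha.symm⟩⟩
        exact ESH.indep_wedge_ne E d hV4 hind hzero
      obtain ⟨c0, hc0⟩ := claim1 (b 0)
      have hall : ∀ u, g u = c0 • u := by
        intro u
        by_cases hsp : ∃ t : E, u = t • b 0
        · obtain ⟨t, rfl⟩ := hsp
          rw [map_smul, hc0]
          exact smul_comm t c0 (b 0)
        · have hind : LinearIndependent E ![u, b 0] :=
            linearIndependent_fin2.2 ⟨b.ne_zero 0, fun t ht => hsp ⟨t, ht.symm⟩⟩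
          obtain ⟨cu, hcu⟩ := claim1 u
          obtain ⟨cs, hcs⟩ := claim1 (u + b 0)
          have hexp : cs • u + cs • b 0 = cu • u + c0 • b 0 := by
            rw [← smul_add, ← hcs, map_add, hcu, hc0]
          have hzero : (cs - cu) • u + (cs - c0) • b 0 = 0 := by
            rw [sub_smul, sub_smul, sub_add_sub_comm, hexp, sub_self]
          obtain ⟨e1, e2⟩ := (LinearIndependent.pair_iff.1 hind) (cs - cu) (cs - c0) hzero
          have : cu = cs := (sub_eq_zero.1 e1).symm
          have hcc : cs = c0 := sub_eq_zero.1 e2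
          rw [hcu, this, hcc]
      have hb01 : LinearIndependent E ![b 0, b 1] := by
        have hinj2 : Function.Injective (![0, 1] : Fin 2 → Fin 4) := by decide
        have := b.linearIndependent.comp ![0, 1] hinj2
        have hco : (⇑b ∘ ![0, 1]) = ![b 0, b 1] := by
          funext i; fin_cases i <;> rfl
        rwa [hco] at this
      have hwne := ESH.indep_wedge_ne E d hV4 hb01
      have hsmul2 : ∀ (c c' : E) (x y : V),
          wedgeι E 2 ![c • x, c' • y] = (c * c') • wedgeι E 2 ![x, y] := by
        intro c c' x y
        have h1 : (![c • x, c' • y] : Fin 2 → V) = fun i => (![c, c'] i) • (![x, y] i) := by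
          funext i; fin_cases i <;> rfl
        have h2 := (ESH.wAlt E 2).toMultilinearMap.map_smul_univ ![c, c'] ![x, y]
        rw [show ((ESH.wAlt E 2).toMultilinearMap fun i => ![c, c'] i • ![x, y] i)
            = wedgeι E 2 (fun i => ![c, c'] i • ![x, y] i) from rfl] at h2
        rw [show ((ESH.wAlt E 2).toMultilinearMap ![x, y])
            = wedgeι E 2 ![x, y] from rfl] at h2
        rw [← h1] at h2
        rw [h2, Fin.prod_univ_two]
        norm_num
      have hpres : wedgeι E 2 ![g (b 0), g (b 1)] = wedgeι E 2 ![b 0, b 1] := by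
        have h3 := hstar ![b 0, b 1]
        rw [show (⇑g ∘ ![b 0, b 1]) = ![g (b 0), g (b 1)] from
          by funext i; fin_cases i <;> rfl] at h3
        exact h3
      rw [hall (b 0), hall (b 1), hsmul2] at hpres
      have hc01 : c0 * c0 = 1 := by
        refine smul_left_injective E hwne ?_
        show (c0 * c0) • wedgeι E 2 ![b 0, b 1] = (1 : E) • wedgeι E 2 ![b 0, b 1]
        rw [hpres, one_smul]
      rcases mul_self_eq_one_iff.1 hc01 with h | h
      · left; intro u; rw [hall u, h, one_smul]
      · right; intro u; rw [hall u, h, neg_one_smul]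
    · intro h1
      have hfix : ∀ v : Fin 2 → V, wedgeι E 2 (⇑g ∘ v) = wedgeι E 2 v := by
        rcases h1 with h1 | h1
        · intro v
          congr 1
          funext i
          exact h1 (v i)
        · intro v
          have hv2 : (⇑g ∘ v) = fun i => ((![-1, -1] : Fin 2 → E) i) • (![v 0, v 1] i) := by
            funext i
            fin_cases i <;> simp [h1, neg_one_smul]
          have h2 := (ESH.wAlt E 2).toMultilinearMap.map_smul_univ
            (![-1, -1] : Fin 2 → E) ![v 0, v 1]
          rw [show ((ESH.wAlt E 2).toMultilinearMap fun i => (![-1, -1] : Fin 2 → E) i • ![v 0, v 1] i)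
              = wedgeι E 2 (fun i => (![-1, -1] : Fin 2 → E) i • ![v 0, v 1] i) from rfl] at h2
          rw [show ((ESH.wAlt E 2).toMultilinearMap ![v 0, v 1])
              = wedgeι E 2 ![v 0, v 1] from rfl] at h2
          rw [← hv2] at h2
          rw [h2, Fin.prod_univ_two]
          have hvv : (![v 0, v 1] : Fin 2 → V) = v := by
            funext i; fin_cases i <;> rfl
          rw [hvv]
          norm_num
      have hcomp : Λg = LinearMap.id := by
        apply ESH.wedge_ext E
        intro v
        rw [hΛ, LinearMap.id_apply, hfix]
      intro x
      rw [hcomp, LinearMap.id_apply]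
  exact ⟨S5, S7, S2, S8, S9, S10⟩
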